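/- Let N ≥ 2 and let α be a nowhere-zero holomorphic function on D with α(0) = 1 satisfying Π_{ζ^N=1} α(ζz) = 1 for all z ∈ D. Then f(z) = Π_{ν=0}^∞ α(z^{N^ν}) is a well-defined holomorphic function on D satisfying f(z^N)^N = Π_{ζ^N=1} f(ζz) for all z ∈ D. -/

import Mathlib

open Complex Metric Filter Finset

/-- Let `N ≥ 2` and let `α` be a nowhere-zero holomorphic function on the unit disc with
`α(0) = 1` satisfying `Π_{ζ^N=1} α(ζz) = 1` on the disc. Then
`f(z) = Π_{ν=0}^∞ α(z^{N^ν})` is a well-defined holomorphic function on the disc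
satisfying `f(z^N)^N = Π_{ζ^N=1} f(ζz)`. -/
theorem stmt_13 (N : ℕ) (hN : 2 ≤ N) (α : ℂ → ℂ)
    (hα : DifferentiableOn ℂ α (Metric.ball 0 1)) (h0 : α 0 = 1)
    (hz : ∀ z ∈ Metric.ball (0 : ℂ) 1, α z ≠ 0)
    (hrel : ∀ z ∈ Metric.ball (0 : ℂ) 1,
      ((Polynomial.nthRoots N (1 : ℂ)).map fun ζ => α (ζ * z)).prod = 1) :
    (∀ z ∈ Metric.ball (0 : ℂ) 1, Multipliable fun ν : ℕ => α (z ^ N ^ ν)) ∧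
    DifferentiableOn ℂ (fun z => ∏' ν : ℕ, α (z ^ N ^ ν)) (Metric.ball 0 1) ∧
    ∀ z ∈ Metric.ball (0 : ℂ) 1,
      (∏' ν : ℕ, α ((z ^ N) ^ N ^ ν)) ^ N =
        ((Polynomial.nthRoots N (1 : ℂ)).map fun ζ => ∏' ν : ℕ, α ((ζ * z) ^ N ^ ν)).prod := by
  have hN1 : 1 < N := hN
  have hN0 : 0 < N := by omega
  -- membership in ball ↔ norm < 1
  have hmb : ∀ w : ℂ, w ∈ Metric.ball (0 : ℂ) 1 ↔ ‖w‖ < 1 := by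
    intro w; simp [Metric.mem_ball, dist_eq_norm]
  -- powers of elements of the disc stay in the disc
  have hpowmem : ∀ (w : ℂ), ‖w‖ < 1 → ∀ k : ℕ, ‖w ^ N ^ k‖ < 1 := by
    intro w hw k
    rw [norm_pow]
    calc ‖w‖ ^ N ^ k ≤ ‖w‖ ^ 1 :=
          pow_le_pow_of_le_one (norm_nonneg w) hw.le (Nat.one_le_pow _ _ hN0)
      _ < 1 := by simpa using hw
  -- Step 1: a linear bound  ‖α w - 1‖ ≤ C ‖w‖  on every ball of radius r < 1
  have hC : ∀ r : ℝ, r < 1 → ∃ C : ℝ, 0 < C ∧ ∀ w : ℂ, ‖w‖ ≤ r → ‖α w - 1‖ ≤ C * ‖w‖ := by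
    intro r hr1
    rcases le_or_gt r 0 with hr0 | hr0
    · refine ⟨1, one_pos, fun w hw => ?_⟩
      have hw0 : w = 0 := by
        have : ‖w‖ = 0 := le_antisymm (hw.trans hr0) (norm_nonneg w)
        simpa using this
      simp [hw0, h0]
    · have hdiff : DifferentiableAt ℂ α 0 :=
        hα.differentiableAt (isOpen_ball.mem_nhds (by simp))
      set d := deriv α 0 with hd
      have h1 : (fun x : ℂ => α x - α 0 - (x - 0) • d) =o[nhds 0] fun x : ℂ => x - 0 :=
        hasDerivAt_iff_isLittleO.mp hdiff.hasDerivAt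
      have h2 : ∀ᶠ x : ℂ in nhds 0, ‖α x - α 0 - (x - 0) • d‖ ≤ 1 * ‖x - 0‖ :=
        h1.bound one_pos
      rw [Metric.eventually_nhds_iff] at h2
      obtain ⟨δ, hδ0, hδ⟩ := h2
      have hsub : closedBall (0 : ℂ) r ⊆ ball 0 1 := closedBall_subset_ball (by linarith)
      have hcont : ContinuousOn (fun w => α w - 1) (closedBall (0 : ℂ) r) :=
        (hα.continuousOn.mono hsub).sub continuousOn_const
      obtain ⟨M, hM⟩ :=
        (isCompact_closedBall (0 : ℂ) r).exists_bound_of_continuousOn hcont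
      refine ⟨(‖d‖ + 1) + (max M 0 + 1) / δ, by positivity, fun w hw => ?_⟩
      rcases lt_or_ge ‖w‖ δ with hlt | hge
      · have hb := hδ (show dist w 0 < δ by simpa [dist_eq_norm] using hlt)
        have hb' : ‖α w - 1 - w * d‖ ≤ ‖w‖ := by
          simpa [h0, smul_eq_mul] using hb
        have : ‖α w - 1‖ ≤ ‖α w - 1 - w * d‖ + ‖w * d‖ := by
          have := norm_add_le (α w - 1 - w * d) (w * d)
          simpa using this
        have hwd : ‖w * d‖ = ‖w‖ * ‖d‖ := norm_mul _ _
        have hpart : (‖d‖ + 1) * ‖w‖ ≤ ((‖d‖ + 1) + (max M 0 + 1) / δ) * ‖w‖ := by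
          apply mul_le_mul_of_nonneg_right _ (norm_nonneg w)
          have : 0 ≤ (max M 0 + 1) / δ := by positivity
          linarith
        nlinarith [norm_nonneg w, norm_nonneg d]
      · have hmem : w ∈ closedBall (0 : ℂ) r := by
          simpa [Metric.mem_closedBall, dist_eq_norm] using hw
        have h3 : ‖α w - 1‖ ≤ max M 0 := le_trans (hM w hmem) (le_max_left _ _)
        have h4 : max M 0 + 1 ≤ ((max M 0 + 1) / δ) * ‖w‖ := by
          rw [div_mul_eq_mul_div, le_div_iff₀ hδ0]
          have h5 : 0 ≤ max M 0 + 1 := by positivity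
          nlinarith
        have h6 : ((max M 0 + 1) / δ) * ‖w‖ ≤ ((‖d‖ + 1) + (max M 0 + 1) / δ) * ‖w‖ := by
          apply mul_le_mul_of_nonneg_right _ (norm_nonneg w)
          have : (0:ℝ) ≤ ‖d‖ + 1 := by positivity
          linarith
        calc ‖α w - 1‖ ≤ max M 0 := h3
          _ ≤ max M 0 + 1 := by linarith
          _ ≤ ((max M 0 + 1) / δ) * ‖w‖ := h4
          _ ≤ ((‖d‖ + 1) + (max M 0 + 1) / δ) * ‖w‖ := h6
  -- Step 2: the key tail estimate
  have hKey : ∀ r : ℝ, 0 ≤ r → r < 1 → ∃ ν₀ : ℕ, ∀ z : ℂ, ‖z‖ ≤ r → ∀ ν : ℕ,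
      ‖α (z ^ N ^ (ν + ν₀)) - 1‖ ≤ (1 / 2) * r ^ ν := by
    intro r hr0 hr1
    obtain ⟨C, hC0, hCb⟩ := hC r hr1
    obtain ⟨ν₀, hν₀⟩ := exists_pow_lt_of_lt_one (show (0:ℝ) < 1 / (2 * C) by positivity) hr1
    refine ⟨ν₀, fun z hzr ν => ?_⟩
    have hzq : ‖z ^ N ^ (ν + ν₀)‖ ≤ r ^ (ν + (ν₀ + 1)) := by
      rw [norm_pow]
      calc ‖z‖ ^ N ^ (ν + ν₀) ≤ r ^ N ^ (ν + ν₀) :=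
            pow_le_pow_left₀ (norm_nonneg z) hzr _
        _ ≤ r ^ (ν + (ν₀ + 1)) := by
            apply pow_le_pow_of_le_one hr0 hr1.le
            have := Nat.lt_pow_self (n := ν + ν₀) hN1
            omega
    have hwr : ‖z ^ N ^ (ν + ν₀)‖ ≤ r := by
      refine hzq.trans ?_
      calc r ^ (ν + (ν₀ + 1)) ≤ r ^ 1 := pow_le_pow_of_le_one hr0 hr1.le (by omega)
        _ = r := pow_one r
    have h1 : ‖α (z ^ N ^ (ν + ν₀)) - 1‖ ≤ C * r ^ (ν + (ν₀ + 1)) :=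
      le_trans (hCb _ hwr) (mul_le_mul_of_nonneg_left hzq hC0.le)
    have h2 : r ^ (ν + (ν₀ + 1)) = r ^ ν * r ^ (ν₀ + 1) := pow_add r ν (ν₀ + 1)
    have h3 : r ^ (ν₀ + 1) ≤ r ^ ν₀ := pow_le_pow_of_le_one hr0 hr1.le (by omega)
    have h4 : C * r ^ ν₀ ≤ 1 / 2 := by
      calc C * r ^ ν₀ ≤ C * (1 / (2 * C)) := mul_le_mul_of_nonneg_left hν₀.le hC0.le
        _ = 1 / 2 := by field_simp
    have h5 : 0 ≤ r ^ ν := pow_nonneg hr0 ν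
    have h7 : C * r ^ (ν₀ + 1) ≤ 1 / 2 :=
      le_trans (mul_le_mul_of_nonneg_left h3 hC0.le) h4
    calc ‖α (z ^ N ^ (ν + ν₀)) - 1‖ ≤ C * r ^ (ν + (ν₀ + 1)) := h1
      _ = (C * r ^ (ν₀ + 1)) * r ^ ν := by rw [h2]; ring
      _ ≤ (1 / 2) * r ^ ν := mul_le_mul_of_nonneg_right h7 h5
  -- Step 3: tail properties: log bounds, slit-plane membership, HasProd formula
  have hTail : ∀ r : ℝ, 0 ≤ r → r < 1 → ∃ ν₀ : ℕ,
      (∀ z : ℂ, ‖z‖ ≤ r → ∀ ν : ℕ,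
        ‖Complex.log (α (z ^ N ^ (ν + ν₀)))‖ ≤ (3 / 4) * r ^ ν) ∧
      (∀ z : ℂ, ‖z‖ ≤ r → ∀ ν : ℕ, α (z ^ N ^ (ν + ν₀)) ∈ Complex.slitPlane) ∧
      (∀ z : ℂ, ‖z‖ ≤ r → HasProd (fun ν : ℕ => α (z ^ N ^ (ν + ν₀)))
        (Complex.exp (∑' ν : ℕ, Complex.log (α (z ^ N ^ (ν + ν₀)))))) := by
    intro r hr0 hr1
    obtain ⟨ν₀, hkey⟩ := hKey r hr0 hr1
    have hhalf : ∀ z : ℂ, ‖z‖ ≤ r → ∀ ν : ℕ, ‖α (z ^ N ^ (ν + ν₀)) - 1‖ ≤ 1 / 2 := by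
      intro z hzr ν
      refine (hkey z hzr ν).trans ?_
      have : r ^ ν ≤ 1 := pow_le_one₀ hr0 hr1.le
      linarith
    have hlog : ∀ z : ℂ, ‖z‖ ≤ r → ∀ ν : ℕ,
        ‖Complex.log (α (z ^ N ^ (ν + ν₀)))‖ ≤ (3 / 4) * r ^ ν := by
      intro z hzr ν
      have h1 : α (z ^ N ^ (ν + ν₀)) = 1 + (α (z ^ N ^ (ν + ν₀)) - 1) := by ring
      rw [h1]
      refine (Complex.norm_log_one_add_half_le_self (hhalf z hzr ν)).trans ?_
      have := hkey z hzr ν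
      nlinarith [pow_nonneg hr0 ν]
    have hslit : ∀ z : ℂ, ‖z‖ ≤ r → ∀ ν : ℕ, α (z ^ N ^ (ν + ν₀)) ∈ Complex.slitPlane := by
      intro z hzr ν
      rw [Complex.mem_slitPlane_iff]
      left
      have h1 : |(α (z ^ N ^ (ν + ν₀)) - 1).re| ≤ 1 / 2 :=
        le_trans (Complex.abs_re_le_norm _) (hhalf z hzr ν)
      have h2 := abs_le.mp h1
      have h3 : (α (z ^ N ^ (ν + ν₀)) - 1).re = (α (z ^ N ^ (ν + ν₀))).re - 1 := by
        simp [Complex.sub_re]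
      linarith [h2.1]
    refine ⟨ν₀, hlog, hslit, fun z hzr => ?_⟩
    have hsum : Summable fun ν : ℕ => Complex.log (α (z ^ N ^ (ν + ν₀))) := by
      apply Summable.of_norm
      apply Summable.of_nonneg_of_le (fun ν => norm_nonneg _) (hlog z hzr)
      exact (summable_geometric_of_lt_one hr0 hr1).mul_left _
    have hzball : ‖z‖ < 1 := lt_of_le_of_lt hzr hr1
    have hnz : ∀ ν : ℕ, α (z ^ N ^ (ν + ν₀)) ≠ 0 := fun ν =>
      hz _ ((hmb _).mpr (hpowmem z hzball _))
    have hp := hsum.hasSum.cexp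
    have heq : (Complex.exp ∘ fun ν : ℕ => Complex.log (α (z ^ N ^ (ν + ν₀)))) =
        fun ν : ℕ => α (z ^ N ^ (ν + ν₀)) :=
      funext fun ν => Complex.exp_log (hnz ν)
    rwa [heq] at hp
  -- Part 1: multipliability
  have part1 : ∀ z ∈ Metric.ball (0 : ℂ) 1, Multipliable fun ν : ℕ => α (z ^ N ^ ν) := by
    intro z hzb
    have hz1 : ‖z‖ < 1 := (hmb z).mp hzb
    obtain ⟨ν₀, -, -, hprod⟩ := hTail ‖z‖ (norm_nonneg z) hz1
    exact (HasProd.prod_range_mul (f := fun ν : ℕ => α (z ^ N ^ ν)) (k := ν₀)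
      (hprod z le_rfl)).multipliable
  refine ⟨part1, ?_, ?_⟩
  -- Part 2: differentiability
  · have key : ∀ z₀ ∈ Metric.ball (0 : ℂ) 1,
        DifferentiableAt ℂ (fun z => ∏' ν : ℕ, α (z ^ N ^ ν)) z₀ := by
      intro z₀ hz₀
      have hz₀1 : ‖z₀‖ < 1 := (hmb z₀).mp hz₀
      set r : ℝ := (‖z₀‖ + 1) / 2 with hrdef
      have hr0 : 0 ≤ r := by positivity
      have hr1 : r < 1 := by rw [hrdef]; linarith
      have hz₀r : ‖z₀‖ < r := by rw [hrdef]; linarith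
      obtain ⟨ν₀, hlog, hslit, hprod⟩ := hTail r hr0 hr1
      set g : ℂ → ℂ := fun z => ∑' ν : ℕ, Complex.log (α (z ^ N ^ (ν + ν₀))) with hgdef
      -- each term is differentiable on ball 0 r
      have hterm : ∀ (k : ℕ) (z : ℂ), z ∈ ball (0 : ℂ) r →
          DifferentiableAt ℂ (fun z => α (z ^ N ^ (k + ν₀))) z := by
        intro k z hzr
        have hz1 : ‖z‖ < 1 :=
          lt_of_lt_of_le (by simpa [dist_eq_norm] using hzr) hr1.le
        have h1 : DifferentiableAt ℂ (fun w : ℂ => w ^ N ^ (k + ν₀)) z :=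
          differentiableAt_pow _
        have h2 : DifferentiableAt ℂ α (z ^ N ^ (k + ν₀)) :=
          hα.differentiableAt (isOpen_ball.mem_nhds ((hmb _).mpr (hpowmem z hz1 _)))
        exact h2.comp z h1
      -- g is differentiable on ball 0 r
      have hgd : DifferentiableOn ℂ g (ball (0 : ℂ) r) := by
        have hTLU : TendstoLocallyUniformlyOn
            (fun (t : Finset ℕ) (z : ℂ) => ∑ ν ∈ t, Complex.log (α (z ^ N ^ (ν + ν₀))))
            g atTop (ball (0 : ℂ) r) := by
          apply TendstoUniformlyOn.tendstoLocallyUniformlyOn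
          apply tendstoUniformlyOn_tsum
            ((summable_geometric_of_lt_one hr0 hr1).mul_left (3 / 4))
          intro ν z hzr
          exact hlog z (le_of_lt (by simpa [dist_eq_norm] using hzr)) ν
        have hdiffF : ∀ t : Finset ℕ, DifferentiableOn ℂ
            (fun z : ℂ => ∑ ν ∈ t, Complex.log (α (z ^ N ^ (ν + ν₀))))
            (ball (0 : ℂ) r) := by
          intro t
          apply DifferentiableOn.fun_sum
          intro ν _
          intro z hzr
          have hzr' : ‖z‖ ≤ r := le_of_lt (by simpa [dist_eq_norm] using hzr)
          exact ((hterm ν z hzr).clog (hslit z hzr' ν)).differentiableWithinAt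
        exact hTLU.differentiableOn (Filter.Eventually.of_forall hdiffF) isOpen_ball
      -- the product agrees with (finite product) * exp (g z) on ball 0 r
      have hEq : Set.EqOn (fun z => ∏' ν : ℕ, α (z ^ N ^ ν))
          (fun z => (∏ ν ∈ Finset.range ν₀, α (z ^ N ^ ν)) * Complex.exp (g z))
          (ball (0 : ℂ) r) := by
        intro z hzr
        have hzr' : ‖z‖ ≤ r := le_of_lt (by simpa [dist_eq_norm] using hzr)
        have hp := hprod z hzr'
        have h1 := Multipliable.prod_mul_tprod_nat_mul' (k := ν₀)
          (f := fun ν : ℕ => α (z ^ N ^ ν)) hp.multipliable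
        have h2 : (∏' ν : ℕ, α (z ^ N ^ (ν + ν₀))) = Complex.exp (g z) := hp.tprod_eq
        simp only []
        rw [← h1, h2]
      have hF : DifferentiableAt ℂ
          (fun z => (∏ ν ∈ Finset.range ν₀, α (z ^ N ^ ν)) * Complex.exp (g z)) z₀ := by
        apply DifferentiableAt.mul
        · apply DifferentiableAt.fun_finsetProd
          intro ν _
          have h1 : DifferentiableAt ℂ (fun w : ℂ => w ^ N ^ ν) z₀ := differentiableAt_pow _
          have h2 : DifferentiableAt ℂ α (z₀ ^ N ^ ν) :=
            hα.differentiableAt (isOpen_ball.mem_nhds ((hmb _).mpr (hpowmem z₀ hz₀1 _)))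
          exact h2.comp z₀ h1
        · exact (hgd.differentiableAt
            (isOpen_ball.mem_nhds (by simpa [Metric.mem_ball, dist_eq_norm] using hz₀r))).cexp
      apply hF.congr_of_eventuallyEq
      exact hEq.eventuallyEq_of_mem
        (isOpen_ball.mem_nhds (by simpa [Metric.mem_ball, dist_eq_norm] using hz₀r))
    exact fun z hzb => (key z hzb).differentiableWithinAt
  -- Part 3: the functional equation
  · intro z hzb
    have hz1 : ‖z‖ < 1 := (hmb z).mp hzb
    have hzN : z ^ N ∈ Metric.ball (0 : ℂ) 1 := by
      rw [hmb, norm_pow]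
      calc ‖z‖ ^ N ≤ ‖z‖ ^ 1 := pow_le_pow_of_le_one (norm_nonneg z) hz1.le (by omega)
        _ < 1 := by simpa using hz1
    -- splitting off the first factor
    have hsplit : ∀ w : ℂ, w ∈ Metric.ball (0 : ℂ) 1 →
        (∏' ν : ℕ, α (w ^ N ^ ν)) = α w * ∏' ν : ℕ, α ((w ^ N) ^ N ^ ν) := by
      intro w hw
      have hw1 : ‖w‖ < 1 := (hmb w).mp hw
      have hwN : w ^ N ∈ Metric.ball (0 : ℂ) 1 := by
        rw [hmb, norm_pow]
        calc ‖w‖ ^ N ≤ ‖w‖ ^ 1 := pow_le_pow_of_le_one (norm_nonneg w) hw1.le (by omega)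
          _ < 1 := by simpa using hw1
      have hrw : (fun ν : ℕ => α ((w ^ N) ^ N ^ ν)) = fun ν : ℕ => α (w ^ N ^ (ν + 1)) := by
        funext ν
        rw [← pow_mul, ← pow_succ']
      have hm : Multipliable fun ν : ℕ => α (w ^ N ^ (ν + 1)) := by
        rw [← hrw]; exact part1 _ hwN
      have h1 := tprod_eq_zero_mul' (f := fun ν : ℕ => α (w ^ N ^ ν)) hm
      rw [h1, hrw]
      simp
    -- each root has modulus one
    have hroot : ∀ ζ ∈ Polynomial.nthRoots N (1 : ℂ), ζ ^ N = 1 := by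
      intro ζ hζ
      exact (Polynomial.mem_nthRoots hN0).mp hζ
    have hball : ∀ ζ ∈ Polynomial.nthRoots N (1 : ℂ), ζ * z ∈ Metric.ball (0 : ℂ) 1 := by
      intro ζ hζ
      have h1 : ‖ζ‖ = 1 := Complex.norm_eq_one_of_pow_eq_one (hroot ζ hζ) (by omega)
      rw [hmb, norm_mul, h1, one_mul]
      exact hz1
    -- rewrite each factor
    have hmap : ((Polynomial.nthRoots N (1 : ℂ)).map
          fun ζ => ∏' ν : ℕ, α ((ζ * z) ^ N ^ ν)) =
        ((Polynomial.nthRoots N (1 : ℂ)).map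
          fun ζ => α (ζ * z) * ∏' ν : ℕ, α ((z ^ N) ^ N ^ ν)) := by
      apply Multiset.map_congr rfl
      intro ζ hζ
      rw [hsplit (ζ * z) (hball ζ hζ)]
      congr 2
      rw [mul_pow, hroot ζ hζ, one_mul]
    rw [hmap, Multiset.prod_map_mul, hrel z hzb, one_mul]
    have hcard : Multiset.card (Polynomial.nthRoots N (1 : ℂ)) = N :=
      (Complex.isPrimitiveRoot_exp N (by omega)).card_nthRoots_one
    rw [Multiset.map_const', Multiset.prod_replicate, hcard]
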